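/- Second-order expansion of the Epstein zeta function: let Q be a positive definite quadratic form, Z a closed discrete subset of V∖{0}, s real with absolute convergence of ζ(Q,Z,s), and H a Q-selfadjoint endomorphism. Set Q_H(x) = Q(x, exp(H)x). Then ζ(Q_H, Z, s) = Σ_{x∈Z} Q(x)^{−s}·(1 − s·Q(x,Hx)/Q(x) + (s²/2)·Q(x,Hx)²/Q(x)² − (s/2)·(Q(Hx)/Q(x) − Q(x,Hx)²/Q(x)²) + O(‖H‖_Q³)), where the error term is uniform in x. -/

import Mathlib

open scoped Nat
set_option maxHeartbeats 1000000


private lemma rpow_le_exp_abs_aux {y : ℝ} (c : ℝ) (h1 : Real.exp (-1) ≤ y)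
    (h2 : y ≤ Real.exp 1) : |y ^ c| ≤ Real.exp |c| := by
  have hy : 0 < y := lt_of_lt_of_le (Real.exp_pos _) h1
  rw [abs_of_nonneg (Real.rpow_nonneg hy.le c), Real.rpow_def_of_pos hy]
  apply Real.exp_le_exp.2
  have hlog : |Real.log y| ≤ 1 := by
    rw [abs_le]
    constructor
    · calc (-1 : ℝ) = Real.log (Real.exp (-1)) := (Real.log_exp _).symm
        _ ≤ Real.log y := Real.log_le_log (Real.exp_pos _) h1
    · calc Real.log y ≤ Real.log (Real.exp 1) := Real.log_le_log hy h2
        _ = 1 := Real.log_exp _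
  calc Real.log y * c ≤ |Real.log y * c| := le_abs_self _
    _ = |c| * |Real.log y| := by rw [abs_mul, mul_comm]
    _ ≤ |c| * 1 := by nlinarith [abs_nonneg c]
    _ = |c| := mul_one _

private lemma taylor_rpow_bound (s : ℝ) :
    ∃ K : ℝ, 0 < K ∧ ∀ t : ℝ, Real.exp (-1) ≤ 1 + t → 1 + t ≤ Real.exp 1 →
      |(1 + t) ^ (-s) - (1 - s * t + s * (s + 1) / 2 * t ^ 2)| ≤ K * |t| ^ 3 := by
  set E : ℝ := Real.exp (|s| + 3) with hE
  have hEpos : 0 < E := Real.exp_pos _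
  set K₀ : ℝ := (|s| + 2) * E with hK0
  have hK0pos : 0 < K₀ := by positivity
  refine ⟨(|s| * (|s| + 1)) * K₀ + 1, by positivity, ?_⟩
  intro t hlo hhi
  set D : Set ℝ := Set.uIcc 0 t with hD
  have hmemD : ∀ y ∈ D, Real.exp (-1) ≤ 1 + y ∧ 1 + y ≤ Real.exp 1 := by
    intro y hy
    rw [hD, Set.mem_uIcc] at hy
    have h1 : Real.exp (-1) ≤ (1:ℝ) := by
      have := Real.exp_le_exp.2 (show (-1:ℝ) ≤ 0 by norm_num)
      simpa using this
    have h2 : (1:ℝ) ≤ Real.exp 1 := by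
      have := Real.exp_le_exp.2 (show (0:ℝ) ≤ 1 by norm_num)
      simpa using this
    rcases hy with ⟨hy1, hy2⟩ | ⟨hy1, hy2⟩
    · constructor <;> nlinarith
    · constructor <;> nlinarith
  have hne : ∀ y ∈ D, (1 : ℝ) + y ≠ 0 := by
    intro y hy
    intro h
    have h1 := (hmemD y hy).1
    have h2 := Real.exp_pos (-1 : ℝ)
    rw [h] at h1; linarith
  have h0D : (0:ℝ) ∈ D := Set.left_mem_uIcc
  have htD : t ∈ D := Set.right_mem_uIcc
  have habs_y : ∀ y ∈ D, |y| ≤ |t| := by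
    intro y hy
    rw [hD, Set.mem_uIcc] at hy
    rcases hy with ⟨hy1, hy2⟩ | ⟨hy1, hy2⟩ <;> rw [abs_le] <;>
      constructor <;> cases abs_cases t <;> linarith [neg_abs_le t, le_abs_self t]
  -- generic derivative of y ↦ (1+y)^c
  have hder : ∀ (c : ℝ), ∀ y ∈ D, HasDerivAt (fun y : ℝ => (1 + y) ^ c)
      (c * (1 + y) ^ (c - 1)) y := by
    intro c y hy
    have h1 : HasDerivAt (fun y : ℝ => 1 + y) 1 y := (hasDerivAt_id y).const_add 1
    have := h1.rpow_const (p := c) (Or.inl (hne y hy))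
    simpa using this
  have hrb : ∀ (c : ℝ), |c| ≤ |s| + 3 → ∀ y ∈ D, |(1 + y) ^ c| ≤ E := by
    intro c hc y hy
    refine le_trans (rpow_le_exp_abs_aux c (hmemD y hy).1 (hmemD y hy).2) ?_
    exact Real.exp_le_exp.2 hc
  have hconvD : Convex ℝ D := convex_uIcc 0 t
  -- Step A : |(1+y)^(-s-2) - 1| ≤ K₀ * |t| on D
  have stepA : ∀ y ∈ D, |(1 + y) ^ (-s - 2) - 1| ≤ K₀ * |t| := by
    intro y hy
    have hmvt := hconvD.norm_image_sub_le_of_norm_hasDerivWithin_le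
      (f := fun y : ℝ => (1 + y) ^ (-s - 2))
      (f' := fun y : ℝ => (-s - 2) * (1 + y) ^ (-s - 2 - 1))
      (C := K₀)
      (fun z hz => ((hder (-s - 2) z hz)).hasDerivWithinAt)
      (fun z hz => by
        rw [Real.norm_eq_abs, abs_mul]
        have h1 : |(-s - 2 : ℝ)| ≤ |s| + 2 := by
          cases abs_cases s <;> cases abs_cases (-s - 2 : ℝ) <;> linarith
        have h2 : |(1 + z) ^ (-s - 2 - 1)| ≤ E := by
          apply hrb _ _ z hz
          cases abs_cases s <;> cases abs_cases (-s - 2 - 1 : ℝ) <;> linarith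
        calc |(-s - 2 : ℝ)| * |(1 + z) ^ (-s - 2 - 1)| ≤ (|s| + 2) * E := by
              apply mul_le_mul h1 h2 (abs_nonneg _) (by positivity)
          _ = K₀ := rfl)
      h0D hy
    simp only [Real.norm_eq_abs] at hmvt
    have h10 : ((1 : ℝ) + 0) ^ (-s - 2) = 1 := by norm_num
    rw [h10] at hmvt
    calc |(1 + y) ^ (-s - 2) - 1| ≤ K₀ * |y - 0| := hmvt
      _ = K₀ * |y| := by rw [sub_zero]
      _ ≤ K₀ * |t| := by
          exact mul_le_mul_of_nonneg_left (habs_y y hy) hK0pos.le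
  -- Step B : |h₁ y| ≤ (|s|*(|s|+1)*K₀*|t|) * |t| on D
  set h₁ : ℝ → ℝ := fun y => -s * (1 + y) ^ (-s - 1) + s - s * (s + 1) * y with hh₁
  have hh₁der : ∀ y ∈ D, HasDerivAt h₁ (s * (s + 1) * ((1 + y) ^ (-s - 2) - 1)) y := by
    intro y hy
    have hA := (hder (-s - 1) y hy).const_mul (-s)
    have hB : HasDerivAt (fun y : ℝ => s - s * (s + 1) * y) (-(s * (s + 1))) y := by
      simpa using (((hasDerivAt_id y).const_mul (s * (s + 1)))).const_sub s
    have hC := hA.add hB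
    have hexp : (-s - 1 - 1 : ℝ) = -s - 2 := by ring
    rw [hexp] at hC
    have hfun : h₁ = ((fun y => -s * (1 + y) ^ (-s - 1)) + fun y : ℝ => s - s * (s + 1) * y) := by
      funext z; simp only [hh₁, Pi.add_apply]; ring
    rw [hfun]; exact hC.congr_deriv (by ring)
  have stepB : ∀ y ∈ D, |h₁ y| ≤ (|s| * (|s| + 1) * K₀ * |t|) * |t| := by
    intro y hy
    have hmvt := hconvD.norm_image_sub_le_of_norm_hasDerivWithin_le
      (f := h₁)
      (f' := fun y : ℝ => s * (s + 1) * ((1 + y) ^ (-s - 2) - 1))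
      (C := |s| * (|s| + 1) * K₀ * |t|)
      (fun z hz => (hh₁der z hz).hasDerivWithinAt)
      (fun z hz => by
        rw [Real.norm_eq_abs, abs_mul]
        have h1 : |s * (s + 1)| ≤ |s| * (|s| + 1) := by
          rw [abs_mul]
          exact mul_le_mul_of_nonneg_left (by cases abs_cases (s+1:ℝ) <;> cases abs_cases s <;> linarith) (abs_nonneg s)
        calc |s * (s + 1)| * |(1 + z) ^ (-s - 2) - 1| ≤ (|s| * (|s| + 1)) * (K₀ * |t|) := by
              apply mul_le_mul h1 (stepA z hz) (abs_nonneg _) (by positivity)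
          _ = |s| * (|s| + 1) * K₀ * |t| := by ring)
      h0D hy
    simp only [Real.norm_eq_abs] at hmvt
    have h10 : h₁ 0 = 0 := by simp [hh₁]
    rw [h10, sub_zero, sub_zero] at hmvt
    calc |h₁ y| ≤ (|s| * (|s| + 1) * K₀ * |t|) * |y| := hmvt
      _ ≤ (|s| * (|s| + 1) * K₀ * |t|) * |t| := by
          apply mul_le_mul_of_nonneg_left (habs_y y hy) (by positivity)
  -- Step C
  set g : ℝ → ℝ := fun y => (1 + y) ^ (-s) - (1 - s * y + s * (s + 1) / 2 * y ^ 2) with hg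
  have hgder : ∀ y ∈ D, HasDerivAt g (h₁ y) y := by
    intro y hy
    have hp : HasDerivAt (fun y : ℝ => 1 - s * y + s * (s + 1) / 2 * y ^ 2)
        (-s + s * (s + 1) * y) y := by
      have h1 : HasDerivAt (fun y : ℝ => s * y) s y := by
        simpa using (hasDerivAt_id y).const_mul s
      have h2 : HasDerivAt (fun y : ℝ => y ^ 2) (2 * y) y := by
        simpa using hasDerivAt_pow 2 y
      have := (h1.const_sub 1).add (h2.const_mul (s * (s + 1) / 2))
      exact this.congr_deriv (by ring)
    have := (hder (-s) y hy).sub hp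
    exact this.congr_deriv (by simp only [hh₁]; ring)
  have hmvt := hconvD.norm_image_sub_le_of_norm_hasDerivWithin_le
    (f := g) (f' := h₁)
    (C := |s| * (|s| + 1) * K₀ * |t| * |t|)
    (fun z hz => (hgder z hz).hasDerivWithinAt)
    (fun z hz => by rw [Real.norm_eq_abs]; simpa using stepB z hz)
    h0D htD
  simp only [Real.norm_eq_abs] at hmvt
  have hg0 : g 0 = 0 := by simp [hg]
  rw [hg0, sub_zero, sub_zero] at hmvt
  calc |(1 + t) ^ (-s) - (1 - s * t + s * (s + 1) / 2 * t ^ 2)| = |g t| := rfl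
    _ ≤ |s| * (|s| + 1) * K₀ * |t| * |t| * |t| := hmvt
    _ = (|s| * (|s| + 1)) * K₀ * |t| ^ 3 := by ring
    _ ≤ ((|s| * (|s| + 1)) * K₀ + 1) * |t| ^ 3 := by nlinarith [abs_nonneg t, pow_nonneg (abs_nonneg t) 3]


section Helpers

variable {V : Type*} [NormedAddCommGroup V] [NormedSpace ℝ V] [FiniteDimensional ℝ V]

private lemma exp_apply_eq_tsum (K : V →L[ℝ] V) (v : V) :
    NormedSpace.exp K v = ∑' n : ℕ, (n ! : ℝ)⁻¹ • ((K ^ n) v) := by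
  haveI : CompleteSpace V := FiniteDimensional.complete ℝ V
  rw [NormedSpace.exp_eq_tsum ℝ]
  have hsum : Summable (fun n : ℕ => (n ! : ℝ)⁻¹ • (K ^ n)) :=
    NormedSpace.expSeries_summable' (𝕂 := ℝ) K
  have := (ContinuousLinearMap.apply ℝ V v).map_tsum hsum
  simpa using this

private lemma summable_apply (K : V →L[ℝ] V) (v : V) :
    Summable (fun n : ℕ => (n ! : ℝ)⁻¹ • ((K ^ n) v)) := by
  haveI : CompleteSpace V := FiniteDimensional.complete ℝ V
  have hsum : Summable (fun n : ℕ => (n ! : ℝ)⁻¹ • (K ^ n)) :=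
    NormedSpace.expSeries_summable' (𝕂 := ℝ) K
  have := hsum.map (ContinuousLinearMap.apply ℝ V v)
    (ContinuousLinearMap.apply ℝ V v).continuous
  simpa [Function.comp_def] using this

private lemma Q_exp_eq_tsum (Q : V →ₗ[ℝ] V →ₗ[ℝ] ℝ) (K : V →L[ℝ] V) (v w : V) :
    Q v (NormedSpace.exp K w) = ∑' n : ℕ, (n ! : ℝ)⁻¹ * Q v ((K ^ n) w) := by
  rw [exp_apply_eq_tsum]
  let Φ : V →L[ℝ] ℝ := LinearMap.toContinuousLinearMap (Q v)
  have hΦ : ∀ u, Φ u = Q v u := fun u => rfl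
  have := Φ.map_tsum (summable_apply K w)
  simp only [map_smul, smul_eq_mul] at this ⊢
  rw [← hΦ, this]
  exact tsum_congr fun n => by rw [hΦ]

private lemma Q_summable (Q : V →ₗ[ℝ] V →ₗ[ℝ] ℝ) (K : V →L[ℝ] V) (v w : V) :
    Summable (fun n : ℕ => (n ! : ℝ)⁻¹ * Q v ((K ^ n) w)) := by
  let Φ : V →L[ℝ] ℝ := LinearMap.toContinuousLinearMap (Q v)
  have := (summable_apply K w).map Φ Φ.continuous
  refine Summable.congr this fun n => ?_
  simp only [Function.comp_apply, map_smul, smul_eq_mul]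
  rfl

private lemma Q_exp_eq_tsum' (Q : V →ₗ[ℝ] V →ₗ[ℝ] ℝ) (K : V →L[ℝ] V) (v w : V) :
    Q (NormedSpace.exp K v) w = ∑' n : ℕ, (n ! : ℝ)⁻¹ * Q ((K ^ n) v) w := by
  rw [exp_apply_eq_tsum]
  let Φ : V →L[ℝ] ℝ := LinearMap.toContinuousLinearMap (Q.flip w)
  have hΦ : ∀ u, Φ u = Q u w := fun u => rfl
  have := Φ.map_tsum (summable_apply K v)
  simp only [map_smul, smul_eq_mul] at this ⊢
  rw [← hΦ, this]
  exact tsum_congr fun n => by rw [hΦ]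

end Helpers

private lemma per_point_bound (s K η T q a' b' : ℝ) (hKpos : 0 < K)
    (hK : ∀ t : ℝ, Real.exp (-1) ≤ 1 + t → 1 + t ≤ Real.exp 1 →
      |(1 + t) ^ (-s) - (1 - s * t + s * (s + 1) / 2 * t ^ 2)| ≤ K * |t| ^ 3)
    (hη0 : 0 ≤ η) (hη1 : η ≤ 1) (hq : 0 < q)
    (hTlo : Real.exp (-η) * q ≤ T) (hThi : T ≤ Real.exp η * q)
    (ha' : |a'| ≤ η * q) (hb'0 : 0 ≤ b') (hb' : b' ≤ η^2 * q)
    (htl : |T - (q + a' + b'/2)| ≤ η^3 * q) :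
    |(T / q) ^ (-s) - (1 - s * (a'/q) + s^2/2 * (a'/q)^2 - s/2 * (b'/q - (a'/q)^2))|
        ≤ (27*K + |s| + 4*|s*(s+1)| + 1) * η ^ 3 ∧
    T ^ (-s) = q ^ (-s) *
      (1 - s * (a'/q) + s^2/2 * (a'/q)^2 - s/2 * (b'/q - (a'/q)^2) +
        ((T / q) ^ (-s) - (1 - s * (a'/q) + s^2/2 * (a'/q)^2 - s/2 * (b'/q - (a'/q)^2)))) := by
  have hT0 : 0 < T := lt_of_lt_of_le (mul_pos (Real.exp_pos _) hq) hTlo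
  set t : ℝ := T / q - 1 with ht
  set α : ℝ := a' / q with hα'
  set β : ℝ := b' / q with hβ'
  have hu : T / q = 1 + t := by rw [ht]; ring
  have hlo : Real.exp (-1) ≤ 1 + t := by
    rw [← hu, le_div_iff₀ hq]
    calc Real.exp (-1) * q ≤ Real.exp (-η) * q :=
          mul_le_mul_of_nonneg_right (Real.exp_le_exp.2 (by linarith)) hq.le
      _ ≤ T := hTlo
  have hhi : 1 + t ≤ Real.exp 1 := by
    rw [← hu, div_le_iff₀ hq]
    calc T ≤ Real.exp η * q := hThi
      _ ≤ Real.exp 1 * q :=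
          mul_le_mul_of_nonneg_right (Real.exp_le_exp.2 hη1) hq.le
  have hmain := hK t hlo hhi
  have hαb : |α| ≤ η := by
    rw [hα', abs_div, abs_of_pos hq, div_le_iff₀ hq]
    exact ha'
  have hβb0 : 0 ≤ β := div_nonneg hb'0 hq.le
  have hβb : β ≤ η^2 := by
    rw [hβ', div_le_iff₀ hq]; linarith [hb']
  have htail2 : |t - α - β/2| ≤ η^3 := by
    have he : t - α - β/2 = (T - (q + a' + b'/2)) / q := by
      rw [ht, hα', hβ']; field_simp; ring
    rw [he, abs_div, abs_of_pos hq, div_le_iff₀ hq]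
    exact htl
  have hη3 : η^3 ≤ η := by nlinarith
  have hη2 : η^2 ≤ η := by nlinarith
  have htb : |t| ≤ 3*η := by
    have h1 : t = (t - α - β/2) + α + β/2 := by ring
    rw [h1]
    refine le_trans (abs_add_three _ _ _) ?_
    rw [abs_of_nonneg (by linarith : (0:ℝ) ≤ β/2)]
    linarith [htail2, hαb, hβb, hη3, hη2]
  have htα : |t - α| ≤ 2*η^2 := by
    have h1 : t - α = (t - α - β/2) + β/2 := by ring
    rw [h1]
    refine le_trans (abs_add_le _ _) ?_
    rw [abs_of_nonneg (by linarith : (0:ℝ) ≤ β/2)]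
    have h2 : η^3 ≤ η^2 := by nlinarith
    linarith [htail2, hβb]
  have htpα : |t + α| ≤ 4*η := by
    refine le_trans (abs_add_le _ _) ?_
    linarith [htb, hαb]
  have ht2α2 : |t^2 - α^2| ≤ 8*η^3 := by
    have h1 : t^2 - α^2 = (t - α)*(t + α) := by ring
    rw [h1, abs_mul]
    calc (|t-α|) * (|t+α|) ≤ (2*η^2) * (4*η) :=
          mul_le_mul htα htpα (abs_nonneg _) (by positivity)
      _ = 8*η^3 := by ring
  have ht3 : |t|^3 ≤ 27*η^3 := by
    calc |t|^3 ≤ (3*η)^3 := pow_le_pow_left₀ (abs_nonneg t) htb 3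
      _ = 27*η^3 := by ring
  have hrx : (T / q) ^ (-s) - (1 - s * α + s^2/2 * α^2 - s/2 * (β - α^2))
      = ((1+t) ^ (-s) - (1 - s*t + s*(s+1)/2*t^2))
        + (-(s*(t - α - β/2)) + s*(s+1)/2*(t^2 - α^2)) := by
    rw [hu]; ring
  constructor
  · rw [hrx]
    refine le_trans (abs_add_le _ _) ?_
    have h2 : |(-(s*(t - α - β/2)) + s*(s+1)/2*(t^2 - α^2))|
        ≤ (|s|) * η^3 + 4 * (|s*(s+1)|) * η^3 := by
      refine le_trans (abs_add_le _ _) ?_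
      rw [abs_neg, abs_mul]
      have h3 : (|s|) * (|t - α - β/2|) ≤ (|s|) * η^3 :=
        mul_le_mul_of_nonneg_left htail2 (abs_nonneg s)
      have h4 : |s*(s+1)/2*(t^2-α^2)| ≤ 4 * (|s*(s+1)|) * η^3 := by
        rw [abs_mul]
        have h5 : |s*(s+1)/2| = (|s*(s+1)|)/2 := by
          rw [abs_div]; norm_num
        rw [h5]
        calc (|s*(s+1)|)/2 * (|t^2-α^2|) ≤ (|s*(s+1)|)/2 * (8*η^3) :=
            mul_le_mul_of_nonneg_left ht2α2 (by positivity)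
          _ = 4 * (|s*(s+1)|) * η^3 := by ring
      linarith
    have h6 : K * |t|^3 ≤ K * (27*η^3) := mul_le_mul_of_nonneg_left ht3 hKpos.le
    have h7 : (0:ℝ) ≤ η^3 := by positivity
    linarith [hmain, h2, h6, h7]
  · have h7 : (1 - s * α + s^2/2 * α^2 - s/2 * (β - α^2) +
        ((T / q) ^ (-s) - (1 - s * α + s^2/2 * α^2 - s/2 * (β - α^2)))) = (T/q) ^ (-s) := by
      ring
    rw [h7, Real.div_rpow hT0.le hq.le]
    have h8 : q ^ (-s) ≠ 0 := (Real.rpow_pos_of_pos hq (-s)).ne'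
    field_simp

theorem epstein_zeta_second_order_expansion
    {V : Type*} [NormedAddCommGroup V] [NormedSpace ℝ V] [FiniteDimensional ℝ V]
    (Q : V →ₗ[ℝ] V →ₗ[ℝ] ℝ)
    (hsymm : ∀ x y, Q x y = Q y x) (hpos : ∀ x : V, x ≠ 0 → 0 < Q x x)
    (Z : Set V) (hZclosed : IsClosed Z) (hZdisc : DiscreteTopology Z)
    (hZ0 : (0 : V) ∉ Z)
    (s : ℝ) (hconv : Summable fun x : Z => (Q x x : ℝ) ^ (-s)) :
    ∃ C : ℝ, 0 < C ∧ ∀ η : ℝ, 0 ≤ η → η ≤ 1 →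
      ∀ H : V →L[ℝ] V, (∀ x y, Q x (H y) = Q (H x) y) →
        (∀ x, Q (H x) (H x) ≤ η ^ 2 * Q x x) →
        ∃ r : V → ℝ, (∀ x ∈ Z, |r x| ≤ C * η ^ 3) ∧
          (∑' x : Z, (Q x (NormedSpace.exp H x) : ℝ) ^ (-s)) =
            ∑' x : Z, ((Q x x : ℝ) ^ (-s)) *
              (1 - s * (Q x (H x) / Q x x)
                + s ^ 2 / 2 * (Q x (H x) / Q x x) ^ 2
                - s / 2 * (Q (H x) (H x) / Q x x - (Q x (H x) / Q x x) ^ 2)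
                + r x) := by
  obtain ⟨K, hKpos, hK⟩ := taylor_rpow_bound s
  refine ⟨27*K + |s| + 4*|s*(s+1)| + 1,
    by linarith [hKpos, abs_nonneg s, abs_nonneg (s*(s+1))], ?_⟩
  intro η hη0 hη1 H hsa hH2
  have hnonneg : ∀ v : V, 0 ≤ Q v v := by
    intro v
    by_cases hv : v = 0
    · simp [hv]
    · exact (hpos v hv).le
  have cs : ∀ v w : V, (Q v w) ^ 2 ≤ Q v v * Q w w := by
    intro v w
    have h := discrim_le_zero (a := Q w w) (b := 2 * Q v w) (c := Q v v) ?_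
    · rw [discrim] at h; nlinarith
    · intro τ
      have h0 := hnonneg (τ • w + v)
      simp only [map_add, map_smul, LinearMap.add_apply, LinearMap.smul_apply,
        smul_eq_mul] at h0
      rw [hsymm w v] at h0
      nlinarith [h0]
  -- selfadjointness of powers
  have hsaK : ∀ (K : V →L[ℝ] V), (∀ v w, Q v (K w) = Q (K v) w) → ∀ (n : ℕ) (v w : V),
      Q v ((K ^ n) w) = Q ((K ^ n) v) w := by
    intro K hK n
    induction n with
    | zero => intro v w; simp
    | succ n ih =>
      intro v w
      have e1 : (K ^ (n + 1)) w = (K ^ n) (K w) := by rw [pow_succ]; rfl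
      have e2 : (K ^ (n + 1)) v = K ((K ^ n) v) := by rw [pow_succ']; rfl
      rw [e1, e2, ih v (K w), hK]
  -- power norm bounds
  have hpow : ∀ (K : V →L[ℝ] V), (∀ v, Q (K v) (K v) ≤ η ^ 2 * Q v v) → ∀ (n : ℕ) (v : V),
      Q ((K ^ n) v) ((K ^ n) v) ≤ η ^ (2 * n) * Q v v := by
    intro K hKb n
    induction n with
    | zero => intro v; simp
    | succ n ih =>
      intro v
      have e2 : (K ^ (n + 1)) v = K ((K ^ n) v) := by rw [pow_succ']; rfl
      rw [e2]
      calc Q (K ((K ^ n) v)) (K ((K ^ n) v)) ≤ η ^ 2 * Q ((K ^ n) v) ((K ^ n) v) := hKb _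
        _ ≤ η ^ 2 * (η ^ (2 * n) * Q v v) :=
            mul_le_mul_of_nonneg_left (ih v) (by positivity)
        _ = η ^ (2 * (n + 1)) * Q v v := by ring
  have habs : ∀ (K : V →L[ℝ] V), (∀ v, Q (K v) (K v) ≤ η ^ 2 * Q v v) → ∀ (n : ℕ) (v : V),
      |Q v ((K ^ n) v)| ≤ η ^ n * Q v v := by
    intro K hKb n v
    have h1 := cs v ((K ^ n) v)
    have h2 := hpow K hKb n v
    have h3 : (Q v ((K ^ n) v)) ^ 2 ≤ (η ^ n * Q v v) ^ 2 := by
      calc (Q v ((K ^ n) v)) ^ 2 ≤ Q v v * Q ((K ^ n) v) ((K ^ n) v) := h1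
        _ ≤ Q v v * (η ^ (2 * n) * Q v v) := mul_le_mul_of_nonneg_left h2 (hnonneg v)
        _ = (η ^ n * Q v v) ^ 2 := by rw [pow_mul]; ring
    have h4 : 0 ≤ η ^ n * Q v v := mul_nonneg (pow_nonneg hη0 n) (hnonneg v)
    rw [abs_le]
    constructor <;> nlinarith [h3, h4]
  haveI : CompleteSpace V := FiniteDimensional.complete ℝ V
  have hexp_sa : ∀ (K : V →L[ℝ] V), (∀ v w, Q v (K w) = Q (K v) w) → ∀ v w,
      Q v (NormedSpace.exp K w) = Q (NormedSpace.exp K v) w := by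
    intro K hKsa v w
    rw [Q_exp_eq_tsum, Q_exp_eq_tsum']
    exact tsum_congr fun n => by rw [hsaK K hKsa n v w]
  have hexpη : ∑' n : ℕ, η ^ n / (n ! : ℝ) = Real.exp η := by
    rw [Real.exp_eq_exp_ℝ, NormedSpace.exp_eq_tsum_div]
  have hsumη : Summable (fun n : ℕ => η ^ n / (n ! : ℝ)) := Real.summable_pow_div_factorial η
  have hQe_upper : ∀ (K : V →L[ℝ] V), (∀ v, Q (K v) (K v) ≤ η ^ 2 * Q v v) → ∀ v,
      Q v (NormedSpace.exp K v) ≤ Real.exp η * Q v v := by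
    intro K hKb v
    rw [Q_exp_eq_tsum]
    have h1 : ∀ n : ℕ, (n ! : ℝ)⁻¹ * Q v ((K ^ n) v) ≤ η ^ n / (n ! : ℝ) * Q v v := by
      intro n
      have h2 := (abs_le.1 (habs K hKb n v)).2
      have hfac : (0:ℝ) ≤ (n ! : ℝ)⁻¹ := by positivity
      calc (n ! : ℝ)⁻¹ * Q v ((K ^ n) v) ≤ (n ! : ℝ)⁻¹ * (η ^ n * Q v v) :=
            mul_le_mul_of_nonneg_left h2 hfac
        _ = η ^ n / (n ! : ℝ) * Q v v := by ring
    calc (∑' n : ℕ, (n ! : ℝ)⁻¹ * Q v ((K ^ n) v))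
        ≤ ∑' n : ℕ, η ^ n / (n ! : ℝ) * Q v v :=
          Summable.tsum_le_tsum h1 (Q_summable Q K v v) (hsumη.mul_right _)
      _ = Real.exp η * Q v v := by rw [tsum_mul_right, hexpη]
  have hH2neg : ∀ v, Q ((-H) v) ((-H) v) ≤ η ^ 2 * Q v v := by
    intro v
    simp only [ContinuousLinearMap.neg_apply, map_neg, LinearMap.neg_apply, neg_neg]
    exact hH2 v
  set A : V →L[ℝ] V := (2⁻¹ : ℝ) • H with hA
  have hA_sa : ∀ v w, Q v (A w) = Q (A v) w := by
    intro v w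
    simp only [hA, ContinuousLinearMap.smul_apply, map_smul, LinearMap.smul_apply,
      smul_eq_mul]
    rw [hsa]
  have hAA : NormedSpace.exp A * NormedSpace.exp A = NormedSpace.exp H := by
    rw [← NormedSpace.exp_add_of_commute_of_mem_ball (𝕂 := ℝ) (Commute.refl A) ((NormedSpace.expSeries_radius_eq_top ℝ (V →L[ℝ] V)).symm ▸ edist_lt_top _ _) ((NormedSpace.expSeries_radius_eq_top ℝ (V →L[ℝ] V)).symm ▸ edist_lt_top _ _)]
    congr 1
    rw [hA, ← add_smul]; norm_num
  have hAneg : NormedSpace.exp (-A) * NormedSpace.exp (-A) = NormedSpace.exp (-H) := by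
    rw [← NormedSpace.exp_add_of_commute_of_mem_ball (𝕂 := ℝ) (Commute.refl (-A)) ((NormedSpace.expSeries_radius_eq_top ℝ (V →L[ℝ] V)).symm ▸ edist_lt_top _ _) ((NormedSpace.expSeries_radius_eq_top ℝ (V →L[ℝ] V)).symm ▸ edist_lt_top _ _)]
    congr 1
    rw [hA, ← neg_smul, ← add_smul]
    norm_num
  have hnegA_sa : ∀ v w, Q v ((-A) w) = Q ((-A) v) w := by
    intro v w
    simp only [ContinuousLinearMap.neg_apply, map_neg, LinearMap.neg_apply]
    rw [hA_sa]
  have hinv : ∀ v, NormedSpace.exp (-A) (NormedSpace.exp A v) = v := by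
    intro v
    have h1 : NormedSpace.exp (-A) * NormedSpace.exp A = 1 := by
      rw [← NormedSpace.exp_add_of_commute_of_mem_ball (𝕂 := ℝ) (Commute.neg_left (Commute.refl A)) ((NormedSpace.expSeries_radius_eq_top ℝ (V →L[ℝ] V)).symm ▸ edist_lt_top _ _) ((NormedSpace.expSeries_radius_eq_top ℝ (V →L[ℝ] V)).symm ▸ edist_lt_top _ _)]
      simp
    calc NormedSpace.exp (-A) (NormedSpace.exp A v)
        = (NormedSpace.exp (-A) * NormedSpace.exp A) v := rfl
      _ = v := by rw [h1]; rfl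
  have hQe_lower : ∀ v, Real.exp (-η) * Q v v ≤ Q v (NormedSpace.exp H v) := by
    intro v
    set u : V := NormedSpace.exp A v with hu
    have hTu : Q v (NormedSpace.exp H v) = Q u u := by
      calc Q v (NormedSpace.exp H v)
          = Q v (NormedSpace.exp A (NormedSpace.exp A v)) := by rw [← hAA]; rfl
        _ = Q (NormedSpace.exp A v) (NormedSpace.exp A v) := by
            rw [hexp_sa A hA_sa]
        _ = Q u u := rfl
    have hqu : Q v v = Q u (NormedSpace.exp (-H) u) := by
      calc Q v v = Q (NormedSpace.exp (-A) u) (NormedSpace.exp (-A) u) := by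
            rw [hu, hinv]
        _ = Q u (NormedSpace.exp (-A) (NormedSpace.exp (-A) u)) :=
            (hexp_sa (-A) hnegA_sa u _).symm
        _ = Q u (NormedSpace.exp (-H) u) := by rw [← hAneg]; rfl
    have hup : Q u (NormedSpace.exp (-H) u) ≤ Real.exp η * Q u u :=
      hQe_upper (-H) hH2neg u
    rw [hTu, Real.exp_neg, inv_mul_le_iff₀ (Real.exp_pos η)]
    rw [hqu]
    exact hup
  have htail : ∀ v, |Q v (NormedSpace.exp H v) - (Q v v + Q v (H v) + Q (H v) (H v) / 2)|
      ≤ η ^ 3 * Q v v := by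
    intro v
    have hsf := Q_summable Q H v v
    have hps := Summable.sum_add_tsum_nat_add (f := fun n => (n ! : ℝ)⁻¹ * Q v ((H ^ n) v)) 3 hsf
    have hf2 : (((2:ℕ)) ! : ℝ)⁻¹ * Q v ((H ^ 2) v) = Q (H v) (H v) / 2 := by
      have h2 : (H ^ 2) v = H (H v) := by rw [pow_two]; rfl
      rw [h2, hsa]
      norm_num [Nat.factorial]
      ring
    have hsum3 : ∑ i ∈ Finset.range 3, ((i) ! : ℝ)⁻¹ * Q v ((H ^ i) v)
        = Q v v + Q v (H v) + Q (H v) (H v) / 2 := by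
      rw [Finset.sum_range_succ, Finset.sum_range_succ, Finset.sum_range_one, hf2]
      simp
    have hterm : ∀ n : ℕ, |(((n+3)) ! : ℝ)⁻¹ * Q v ((H ^ (n+3)) v)|
        ≤ η ^ (n+3) / (((n+3)) ! : ℝ) * Q v v := by
      intro n
      have hfp : (0:ℝ) < (((n+3)) ! : ℝ) := by positivity
      rw [abs_mul, abs_inv, abs_of_pos hfp]
      calc (((n+3)) ! : ℝ)⁻¹ * |Q v ((H ^ (n+3)) v)|
          ≤ (((n+3)) ! : ℝ)⁻¹ * (η ^ (n+3) * Q v v) :=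
            mul_le_mul_of_nonneg_left (habs H hH2 (n+3) v) (by positivity)
        _ = η ^ (n+3) / (((n+3)) ! : ℝ) * Q v v := by ring
    have hsn : Summable (fun n : ℕ => (((n+3)) ! : ℝ)⁻¹ * Q v ((H ^ (n+3)) v)) :=
      (summable_nat_add_iff 3).2 hsf
    have hsg : Summable (fun n : ℕ => η ^ (n+3) / (((n+3)) ! : ℝ) * Q v v) :=
      (summable_nat_add_iff 3).2 (hsumη.mul_right (Q v v))
    have hval : ∑' n : ℕ, η ^ (n+3) / (((n+3)) ! : ℝ) = Real.exp η - (1 + η + η^2/2) := by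
      have h5 := Summable.sum_add_tsum_nat_add (f := fun n => η ^ n / (n ! : ℝ)) 3 hsumη
      have hs3 : ∑ i ∈ Finset.range 3, η ^ i / ((i) ! : ℝ) = 1 + η + η^2/2 := by
        rw [Finset.sum_range_succ, Finset.sum_range_succ, Finset.sum_range_one]
        norm_num [Nat.factorial]
      rw [hexpη, hs3] at h5
      linarith [h5]
    have hexpb := Real.exp_bound (x := η) (by rwa [abs_of_nonneg hη0]) (n := 3) (by norm_num)
    have hexpb2 : Real.exp η - (1 + η + η^2/2) ≤ η ^ 3 := by
      have hs3 : ∑ i ∈ Finset.range 3, η ^ i / ((i) ! : ℝ) = 1 + η + η^2/2 := by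
        rw [Finset.sum_range_succ, Finset.sum_range_succ, Finset.sum_range_one]
        norm_num [Nat.factorial]
      rw [hs3, abs_of_nonneg hη0] at hexpb
      have h6 := (abs_le.1 hexpb).2
      have h7 : (0:ℝ) ≤ η ^ 3 := by positivity
      norm_num [Nat.factorial] at h6
      nlinarith [h6, h7]
    have htt : |∑' n : ℕ, (((n+3)) ! : ℝ)⁻¹ * Q v ((H ^ (n+3)) v)| ≤ η ^ 3 * Q v v := by
      calc |∑' n : ℕ, (((n+3)) ! : ℝ)⁻¹ * Q v ((H ^ (n+3)) v)|
          ≤ ∑' n : ℕ, |(((n+3)) ! : ℝ)⁻¹ * Q v ((H ^ (n+3)) v)| :=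
            norm_tsum_le_tsum_norm (f := fun n : ℕ => (((n+3)) ! : ℝ)⁻¹ * Q v ((H ^ (n+3)) v)) hsn.abs
        _ ≤ ∑' n : ℕ, η ^ (n+3) / (((n+3)) ! : ℝ) * Q v v :=
            Summable.tsum_le_tsum hterm hsn.abs hsg
        _ = (∑' n : ℕ, η ^ (n+3) / (((n+3)) ! : ℝ)) * Q v v := tsum_mul_right
        _ ≤ η ^ 3 * Q v v := by
            rw [hval]
            exact mul_le_mul_of_nonneg_right hexpb2 (hnonneg v)
    rw [Q_exp_eq_tsum, ← hps, hsum3]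
    simpa using htt
  refine ⟨fun x =>
    (Q x (NormedSpace.exp H x) / Q x x) ^ (-s) -
      (1 - s * (Q x (H x) / Q x x) + s ^ 2 / 2 * (Q x (H x) / Q x x) ^ 2
        - s / 2 * (Q (H x) (H x) / Q x x - (Q x (H x) / Q x x) ^ 2)), ?_, ?_⟩
  · intro x hxZ
    have hx : x ≠ 0 := fun h0 => hZ0 (h0 ▸ hxZ)
    have := (per_point_bound s K η (Q x (NormedSpace.exp H x)) (Q x x) (Q x (H x))
      (Q (H x) (H x)) hKpos hK hη0 hη1 (hpos x hx) (hQe_lower x) (hQe_upper H hH2 x)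
      (by simpa using habs H hH2 1 x) (hnonneg (H x)) (hH2 x) (htail x)).1
    simpa using this
  · refine tsum_congr fun x => ?_
    have hx : (x : V) ≠ 0 := fun h0 => hZ0 (h0 ▸ x.2)
    have := (per_point_bound s K η (Q x (NormedSpace.exp H x)) (Q (x:V) (x:V)) (Q x (H x))
      (Q (H x) (H x)) hKpos hK hη0 hη1 (hpos x hx) (hQe_lower x) (hQe_upper H hH2 x)
      (by simpa using habs H hH2 1 x) (hnonneg (H x)) (hH2 x) (htail x)).2
    simpa using this
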